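/- Under the hole-punching graph-cluster randomization design with 0 < p_t < 1 and 0 < p_hp < 1, for each t ∈ {0,1} the variance of the Horvitz–Thompson estimator satisfies Var[μ̂(t)] = (1/N²)·[ (p(t,t)/p(t)² − 1)·Σ_{c∈𝒞} S_c(t,t) + ((p(t) − p(t,t))/p(t)²)·Q(t,t) ]. -/

import Mathlib

open MeasureTheory ProbabilityTheory

/-- The Bernoulli measure on `Bool` with success probability `p`. -/
noncomputable def bernoulliMeasureB (p : ℝ) : Measure Bool :=
  ENNReal.ofReal p • Measure.dirac true + ENNReal.ofReal (1 - p) • Measure.dirac false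

instance bernoulliMeasureB.instIsFiniteMeasure (p : ℝ) :
    IsFiniteMeasure (bernoulliMeasureB p) where
  measure_univ_lt_top := by
    simp [bernoulliMeasureB]

/-- real-valued bernoulli weight -/
noncomputable def bR (q : ℝ) (u : Bool) : ℝ := if u then q else 1 - q

lemma bern_singleton (q : ℝ) (u : Bool) :
    bernoulliMeasureB q {u} = ENNReal.ofReal (bR q u) := by
  cases u <;> simp [bernoulliMeasureB, bR, Measure.dirac_apply]

lemma bern_univ (q : ℝ) (h0 : 0 ≤ q) (h1 : q ≤ 1) :
    bernoulliMeasureB q Set.univ = 1 := by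
  simp [bernoulliMeasureB]
  rw [← ENNReal.ofReal_add h0 (by linarith)]
  norm_num

lemma bern_pair (q : ℝ) (h0 : 0 ≤ q) (h1 : q ≤ 1) :
    bernoulliMeasureB q {false, true} = 1 := by
  have : ({false, true} : Set Bool) = Set.univ := by
    ext b; cases b <;> simp
  rw [this, bern_univ q h0 h1]

lemma bern_prob (q : ℝ) (h0 : 0 ≤ q) (h1 : q ≤ 1) :
    IsProbabilityMeasure (bernoulliMeasureB q) := ⟨bern_univ q h0 h1⟩

lemma pi_single {ι : Type*} [Fintype ι] [DecidableEq ι] (q : ℝ) (h0 : 0 ≤ q) (h1 : q ≤ 1)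
    (i : ι) (u : Bool) :
    (Measure.pi fun _ : ι => bernoulliMeasureB q) {y | y i = u}
      = ENNReal.ofReal (bR q u) := by
  have hs : {y : ι → Bool | y i = u}
      = Set.pi Set.univ (fun k => if k = i then {u} else Set.univ) := by
    ext y
    simp only [Set.mem_setOf_eq, Set.mem_pi, Set.mem_univ, forall_true_left]
    constructor
    · intro h k
      by_cases hk : k = i <;> simp [hk, h]
    · intro h
      have := h i
      simpa using this
  rw [hs, Measure.pi_pi]
  have : ∀ k : ι, bernoulliMeasureB q (if k = i then ({u} : Set Bool) else Set.univ)
      = if k = i then ENNReal.ofReal (bR q u) else 1 := by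
    intro k
    by_cases hk : k = i <;> simp [hk, bern_singleton, bern_univ q h0 h1, bern_pair q h0 h1]
  simp_rw [this]
  simp

lemma pi_double {ι : Type*} [Fintype ι] [DecidableEq ι] (q : ℝ) (h0 : 0 ≤ q) (h1 : q ≤ 1)
    {i j : ι} (hij : i ≠ j) (u v : Bool) :
    (Measure.pi fun _ : ι => bernoulliMeasureB q) {y | y i = u ∧ y j = v}
      = ENNReal.ofReal (bR q u) * ENNReal.ofReal (bR q v) := by
  have hs : {y : ι → Bool | y i = u ∧ y j = v}
      = Set.pi Set.univ (fun k => if k = i then {u} else if k = j then {v} else Set.univ) := by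
    ext y
    simp only [Set.mem_setOf_eq, Set.mem_pi, Set.mem_univ, forall_true_left]
    constructor
    · rintro ⟨h1', h2'⟩ k
      by_cases hk : k = i
      · simp [hk, h1']
      · by_cases hk' : k = j <;> simp [hk, hk', h2', hij.symm]
    · intro h
      refine ⟨?_, ?_⟩
      · have := h i; simpa using this
      · have := h j; simpa [hij.symm] using this
  rw [hs, Measure.pi_pi]
  have hf : ∀ k : ι, bernoulliMeasureB q (if k = i then ({u} : Set Bool)
        else if k = j then {v} else Set.univ)
      = if k = i then ENNReal.ofReal (bR q u)
        else if k = j then ENNReal.ofReal (bR q v) else 1 := by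
    intro k
    by_cases hk : k = i
    · simp [hk, bern_singleton]
    · by_cases hk' : k = j <;> simp [hk, hk', hij.symm, bern_singleton, bern_univ q h0 h1, bern_pair q h0 h1]
  simp_rw [hf]
  rw [← Finset.prod_subset (Finset.subset_univ ({i, j} : Finset ι))
      (by intro k _ hk; simp only [Finset.mem_insert, Finset.mem_singleton, not_or] at hk
          simp [hk.1, hk.2])]
  rw [Finset.prod_pair hij]
  simp [hij, hij.symm]

/-- The hole-punching graph-cluster randomization design measure on the product space
`(C → Bool) × (Fin N → Bool)`: i.i.d. Bernoulli(`pt`) cluster-level assignments and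
i.i.d. Bernoulli(`php`) unit-level flips, all mutually independent. -/
noncomputable def designMeasure (C : Type*) [Fintype C] (N : ℕ) (pt php : ℝ) :
    Measure ((C → Bool) × (Fin N → Bool)) :=
  (Measure.pi fun _ : C => bernoulliMeasureB pt).prod
    (Measure.pi fun _ : Fin N => bernoulliMeasureB php)

/-- The treatment `Z_i` of unit `i`: cluster assignment XOR individual flip. -/
def treat {C : Type*} {N : ℕ} (c : Fin N → C) (i : Fin N)
    (ω : (C → Bool) × (Fin N → Bool)) : Bool :=
  xor (ω.1 (c i)) (ω.2 i)

/-- The marginal propensity `p_i(t) = Pr(Z_i = t)`. -/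
noncomputable def margProp {C : Type*} [Fintype C] {N : ℕ} (pt php : ℝ) (c : Fin N → C)
    (i : Fin N) (t : Bool) : ℝ :=
  (designMeasure C N pt php {ω | treat c i ω = t}).toReal

/-- The joint propensity `p_{ij}(t₁,t₂) = Pr(Z_i = t₁ ∧ Z_j = t₂)`. -/
noncomputable def jointProp {C : Type*} [Fintype C] {N : ℕ} (pt php : ℝ) (c : Fin N → C)
    (i j : Fin N) (t1 t2 : Bool) : ℝ :=
  (designMeasure C N pt php {ω | treat c i ω = t1 ∧ treat c j ω = t2}).toReal

section Design
variable {C : Type*} [Fintype C] [DecidableEq C] {N : ℕ} {pt php : ℝ}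

example : DiscreteMeasurableSpace ((C → Bool) × (Fin N → Bool)) := inferInstance

lemma bR_nonneg {q : ℝ} (h0 : 0 ≤ q) (h1 : q ≤ 1) (u : Bool) : 0 ≤ bR q u := by
  cases u <;> simp [bR] <;> linarith

lemma xor_eq_iff (a b t : Bool) : xor a b = t ↔ b = xor a t := by
  cases a <;> cases b <;> cases t <;> decide

lemma designMeasure_treat (h0 : 0 ≤ pt) (h1 : pt ≤ 1) (h0' : 0 ≤ php) (h1' : php ≤ 1)
    (c : Fin N → C) (i : Fin N) (t : Bool) :
    designMeasure C N pt php {ω | treat c i ω = t}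
      = ENNReal.ofReal (pt * bR php (xor true t) + (1 - pt) * bR php (xor false t)) := by
  have hE : {ω : (C → Bool) × (Fin N → Bool) | treat c i ω = t}
      = ⋃ a : Bool, ({x : C → Bool | x (c i) = a} ×ˢ {y : Fin N → Bool | y i = xor a t}) := by
    ext ω
    simp only [Set.mem_setOf_eq, Set.mem_iUnion, Set.mem_prod, treat, xor_eq_iff]
    constructor
    · intro h; exact ⟨ω.1 (c i), rfl, h⟩
    · rintro ⟨a, ha, hb⟩; rw [ha]; exact hb
  rw [designMeasure, hE, measure_iUnion ?_ (fun a => MeasurableSet.of_discrete)]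
  · rw [tsum_bool, Measure.prod_prod, Measure.prod_prod,
      pi_single pt h0 h1, pi_single pt h0 h1,
      pi_single php h0' h1', pi_single php h0' h1',
      ← ENNReal.ofReal_mul (bR_nonneg h0 h1 _), ← ENNReal.ofReal_mul (bR_nonneg h0 h1 _),
      ← ENNReal.ofReal_add (mul_nonneg (bR_nonneg h0 h1 _) (bR_nonneg h0' h1' _))
        (mul_nonneg (bR_nonneg h0 h1 _) (bR_nonneg h0' h1' _))]
    congr 1
    cases t <;> simp [bR] <;> ring
  · intro a b hab
    rw [Function.onFun, Set.disjoint_left]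
    rintro ω ⟨ha, -⟩ ⟨hb, -⟩
    exact hab (ha.symm.trans hb)

lemma designMeasure_treat2 (h0 : 0 ≤ pt) (h1 : pt ≤ 1) (h0' : 0 ≤ php) (h1' : php ≤ 1)
    (c : Fin N → C) {i j : Fin N} (hij : i ≠ j) (hc : c i ≠ c j) (t : Bool) :
    designMeasure C N pt php {ω | treat c i ω = t ∧ treat c j ω = t}
      = ENNReal.ofReal ((pt * bR php (xor true t) + (1 - pt) * bR php (xor false t))
          * (pt * bR php (xor true t) + (1 - pt) * bR php (xor false t))) := by
  have hE : {ω : (C → Bool) × (Fin N → Bool) | treat c i ω = t ∧ treat c j ω = t}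
      = ⋃ ab : Bool × Bool,
          ({x : C → Bool | x (c i) = ab.1 ∧ x (c j) = ab.2} ×ˢ
            {y : Fin N → Bool | y i = xor ab.1 t ∧ y j = xor ab.2 t}) := by
    ext ω
    simp only [Set.mem_setOf_eq, Set.mem_iUnion, Set.mem_prod, treat, xor_eq_iff]
    constructor
    · rintro ⟨hi, hj⟩; exact ⟨(ω.1 (c i), ω.1 (c j)), ⟨rfl, rfl⟩, hi, hj⟩
    · rintro ⟨⟨a, b⟩, ⟨ha, hb⟩, hi, hj⟩
      exact ⟨by rw [ha]; exact hi, by rw [hb]; exact hj⟩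
  rw [designMeasure, hE, measure_iUnion ?_ (fun a => MeasurableSet.of_discrete)]
  · rw [tsum_fintype]
    have key : ∀ ab : Bool × Bool,
        ((Measure.pi fun _ : C => bernoulliMeasureB pt).prod
          (Measure.pi fun _ : Fin N => bernoulliMeasureB php))
          ({x : C → Bool | x (c i) = ab.1 ∧ x (c j) = ab.2} ×ˢ
            {y : Fin N → Bool | y i = xor ab.1 t ∧ y j = xor ab.2 t})
        = ENNReal.ofReal ((bR pt ab.1 * bR php (xor ab.1 t))
            * (bR pt ab.2 * bR php (xor ab.2 t))) := by
      intro ab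
      rw [Measure.prod_prod, pi_double pt h0 h1 hc ab.1 ab.2,
        pi_double php h0' h1' hij (xor ab.1 t) (xor ab.2 t),
        ← ENNReal.ofReal_mul (bR_nonneg h0 h1 _), ← ENNReal.ofReal_mul (bR_nonneg h0' h1' _),
        ← ENNReal.ofReal_mul (mul_nonneg (bR_nonneg h0 h1 _) (bR_nonneg h0 h1 _))]
      congr 1
      ring
    simp_rw [key]
    rw [Fintype.sum_prod_type]
    simp only [Fintype.sum_bool]
    have np : ∀ a : Bool, 0 ≤ bR pt a * bR php (xor a t) :=
      fun a => mul_nonneg (bR_nonneg h0 h1 _) (bR_nonneg h0' h1' _)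
    have nt : ∀ a b : Bool, 0 ≤ bR pt a * bR php (xor a t) * (bR pt b * bR php (xor b t)) :=
      fun a b => mul_nonneg (np a) (np b)
    rw [← ENNReal.ofReal_add (nt _ _) (nt _ _), ← ENNReal.ofReal_add (nt _ _) (nt _ _),
      ← ENNReal.ofReal_add (add_nonneg (nt _ _) (nt _ _)) (add_nonneg (nt _ _) (nt _ _))]
    congr 1
    cases t <;> simp [bR] <;> ring
  · intro a b hab
    rw [Function.onFun, Set.disjoint_left]
    rintro ω ⟨⟨ha1, ha2⟩, -⟩ ⟨⟨hb1, hb2⟩, -⟩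
    apply hab
    exact Prod.ext (ha1.symm.trans hb1) (ha2.symm.trans hb2)

lemma margProp_eq (h0 : 0 ≤ pt) (h1 : pt ≤ 1) (h0' : 0 ≤ php) (h1' : php ≤ 1)
    (c : Fin N → C) (i : Fin N) (t : Bool) :
    margProp pt php c i t = pt * bR php (xor true t) + (1 - pt) * bR php (xor false t) := by
  rw [margProp, designMeasure_treat h0 h1 h0' h1' c i t, ENNReal.toReal_ofReal]
  have hb := bR_nonneg h0' h1'
  exact add_nonneg (mul_nonneg h0 (hb _)) (mul_nonneg (by linarith) (hb _))

lemma margProp_pos (h0 : 0 < pt) (h1 : pt < 1) (h0' : 0 < php) (h1' : php < 1)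
    (c : Fin N → C) (i : Fin N) (t : Bool) :
    0 < margProp pt php c i t := by
  rw [margProp_eq h0.le h1.le h0'.le h1'.le]
  cases t <;> simp [bR] <;> nlinarith

lemma jointProp_self (c : Fin N → C) (i : Fin N) (t : Bool) :
    jointProp pt php c i i t t = margProp pt php c i t := by
  rw [jointProp, margProp]
  have hs : {ω : (C → Bool) × (Fin N → Bool) | treat c i ω = t ∧ treat c i ω = t}
      = {ω | treat c i ω = t} := by
    ext ω; simp
  rw [hs]

lemma jointProp_indep (h0 : 0 ≤ pt) (h1 : pt ≤ 1) (h0' : 0 ≤ php) (h1' : php ≤ 1)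
    (c : Fin N → C) {i j : Fin N} (hij : i ≠ j) (hc : c i ≠ c j) (t : Bool) :
    jointProp pt php c i j t t = margProp pt php c i t * margProp pt php c j t := by
  rw [jointProp, designMeasure_treat2 h0 h1 h0' h1' c hij hc t,
    ENNReal.toReal_ofReal (mul_self_nonneg _),
    margProp_eq h0 h1 h0' h1', margProp_eq h0 h1 h0' h1']

lemma integral_ite_treat (h0 : 0 ≤ pt) (h1 : pt ≤ 1) (h0' : 0 ≤ php) (h1' : php ≤ 1)
    (c : Fin N → C) (i : Fin N) (t : Bool) (a : ℝ) :
    ∫ ω, (if treat c i ω = t then a else 0) ∂(designMeasure C N pt php)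
      = a * margProp pt php c i t := by
  have hfun : (fun ω : (C → Bool) × (Fin N → Bool) => if treat c i ω = t then a else 0)
      = Set.indicator {ω | treat c i ω = t} (fun _ => a) := by
    ext ω
    rw [Set.indicator_apply]
    rfl
  rw [hfun, integral_indicator_const a MeasurableSet.of_discrete, margProp]
  rw [smul_eq_mul, mul_comm]
  rfl

lemma integral_ite_treat2 (h0 : 0 ≤ pt) (h1 : pt ≤ 1) (h0' : 0 ≤ php) (h1' : php ≤ 1)
    (c : Fin N → C) (i j : Fin N) (t : Bool) (a b : ℝ) :
    ∫ ω, (if treat c i ω = t then a else 0) * (if treat c j ω = t then b else 0)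
        ∂(designMeasure C N pt php)
      = a * b * jointProp pt php c i j t t := by
  have hfun : (fun ω : (C → Bool) × (Fin N → Bool) =>
        (if treat c i ω = t then a else 0) * (if treat c j ω = t then b else 0))
      = Set.indicator {ω | treat c i ω = t ∧ treat c j ω = t} (fun _ => a * b) := by
    ext ω
    rw [Set.indicator_apply]
    by_cases hi : treat c i ω = t <;> by_cases hj : treat c j ω = t <;>
      simp [hi, hj, Set.mem_setOf_eq]
  rw [hfun, integral_indicator_const (a * b) MeasurableSet.of_discrete, jointProp]
  rw [smul_eq_mul, mul_comm]
  rfl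

end Design

/-- The Horvitz–Thompson estimator `μ̂(t)`. -/
noncomputable def htEst {C : Type*} [Fintype C] {N : ℕ} (pt php : ℝ) (c : Fin N → C)
    (Y : Fin N → Bool → ℝ) (t : Bool) (ω : (C → Bool) × (Fin N → Bool)) : ℝ :=
  (1 / (N : ℝ)) * ∑ i, if treat c i ω = t then Y i t / margProp pt php c i t else 0

/-- Under the hole-punching graph-cluster randomization design with `0 < p_t < 1` and
`0 < p_hp < 1`, for each `t ∈ {0,1}` the variance of the Horvitz–Thompson estimator
satisfies
`Var[μ̂(t)] = (1/N²)·[(p(t,t)/p(t)² − 1)·Σ_c S_c(t,t) + ((p(t) − p(t,t))/p(t)²)·Q(t,t)]`,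
where `p(t)` is the common marginal propensity, `p(t1,t2)` is the common joint propensity
of distinct units in the same cluster, `S_c(t1,t2) = Σ_{i∈c} Σ_{j∈c} Y_i(t1)·Y_j(t2)` and
`Q(t1,t2) = Σ_i Y_i(t1)·Y_i(t2)`. -/
theorem ht_variance_design
    {C : Type*} [Fintype C] [DecidableEq C] {N : ℕ} (hN : 1 ≤ N)
    (pt php : ℝ) (hpt0 : 0 < pt) (hpt1 : pt < 1) (hphp0 : 0 < php) (hphp1 : php < 1)
    (c : Fin N → C) (Y : Fin N → Bool → ℝ)
    (p : Bool → ℝ) (hp : ∀ (i : Fin N) (t : Bool), margProp pt php c i t = p t)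
    (pj : Bool → Bool → ℝ)
    (hpj : ∀ (i j : Fin N) (t1 t2 : Bool), i ≠ j → c i = c j →
      jointProp pt php c i j t1 t2 = pj t1 t2)
    (t : Bool) :
    variance (htEst pt php c Y t) (designMeasure C N pt php)
      = (1 / (N : ℝ) ^ 2) *
          ((pj t t / (p t) ^ 2 - 1) *
              (∑ k : C, ∑ i ∈ Finset.univ.filter (fun i => c i = k),
                ∑ j ∈ Finset.univ.filter (fun j => c j = k), Y i t * Y j t)
            + ((p t - pj t t) / (p t) ^ 2) * ∑ i, Y i t * Y i t) := by
  classical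
  have h0 : (0:ℝ) ≤ pt := hpt0.le
  have h1 : pt ≤ 1 := hpt1.le
  have h0' : (0:ℝ) ≤ php := hphp0.le
  have h1' : php ≤ 1 := hphp1.le
  set P := designMeasure C N pt php with hP
  haveI : IsProbabilityMeasure (bernoulliMeasureB pt) := bern_prob pt h0 h1
  haveI : IsProbabilityMeasure (bernoulliMeasureB php) := bern_prob php h0' h1'
  haveI : IsProbabilityMeasure P := by
    rw [hP, designMeasure]; infer_instance
  set A := p t with hA
  set B := pj t t with hB
  have i0 : Fin N := ⟨0, hN⟩
  have hApos : 0 < A := by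
    rw [hA, ← hp i0 t]
    exact margProp_pos hpt0 hpt1 hphp0 hphp1 c i0 t
  have hAne : A ≠ 0 := hApos.ne'
  set g : Fin N → ℝ := fun i => Y i t with hg
  set q : Fin N → Fin N → ℝ := fun i j => jointProp pt php c i j t t with hq
  have hq_diag : ∀ i, q i i = A := fun i => by
    rw [hq]; simp only; rw [jointProp_self, hp i t]
  have hq_same : ∀ i j, i ≠ j → c i = c j → q i j = B := fun i j hij hc => by
    rw [hq]; simp only; rw [hpj i j t t hij hc]
  have hq_diff : ∀ i j, c i ≠ c j → q i j = A * A := fun i j hc => by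
    have hij : i ≠ j := fun h => hc (by rw [h])
    rw [hq]; simp only
    rw [jointProp_indep h0 h1 h0' h1' c hij hc t, hp i t, hp j t]
  -- the estimator as a sum
  set f : Fin N → (C → Bool) × (Fin N → Bool) → ℝ :=
    fun i ω => if treat c i ω = t then g i / A else 0 with hf
  have hht : htEst pt php c Y t = fun ω => (1 / (N : ℝ)) * ∑ i, f i ω := by
    funext ω
    rw [htEst]
    congr 1
    refine Finset.sum_congr rfl fun i _ => ?_
    rw [hp i t]
  have hint : ∀ (F : (C → Bool) × (Fin N → Bool) → ℝ), Integrable F P :=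
    fun F => Integrable.of_finite
  have hEf : ∀ i, ∫ ω, f i ω ∂P = g i := by
    intro i
    rw [hf]
    simp only
    rw [integral_ite_treat h0 h1 h0' h1' c i t (g i / A), hp i t, ← hA,
      div_mul_cancel₀ _ hAne]
  have hEff : ∀ i j, ∫ ω, f i ω * f j ω ∂P = g i / A * (g j / A) * q i j := by
    intro i j
    rw [hf]
    simp only
    rw [integral_ite_treat2 h0 h1 h0' h1' c i j t (g i / A) (g j / A), hq]
  -- mean
  have hmean : ∫ ω, htEst pt php c Y t ω ∂P = (1 / (N : ℝ)) * ∑ i, g i := by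
    rw [hht]
    rw [integral_const_mul]
    rw [integral_finset_sum _ (fun i _ => hint _)]
    simp_rw [hEf]
  -- second moment
  have hsq : ∫ ω, (htEst pt php c Y t ω) ^ 2 ∂P
      = (1 / (N : ℝ)) ^ 2 * ∑ i, ∑ j, g i / A * (g j / A) * q i j := by
    have hsq' : ∀ ω, (htEst pt php c Y t ω) ^ 2
        = (1 / (N : ℝ)) ^ 2 * ∑ i, ∑ j, f i ω * f j ω := by
      intro ω
      rw [hht]
      simp only
      rw [mul_pow]
      congr 1
      rw [sq, Finset.sum_mul_sum]
    simp_rw [hsq']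
    rw [integral_const_mul, integral_finset_sum _ (fun i _ => hint _)]
    congr 1
    refine Finset.sum_congr rfl fun i _ => ?_
    rw [integral_finset_sum _ (fun j _ => hint _)]
    exact Finset.sum_congr rfl fun j _ => hEff i j
  -- variance
  have hvar : variance (htEst pt php c Y t) P
      = (1 / (N : ℝ)) ^ 2 * ∑ i, ∑ j, g i / A * (g j / A) * q i j
        - ((1 / (N : ℝ)) * ∑ i, g i) ^ 2 := by
    rw [variance_eq_sub MemLp.of_discrete]
    simp only [Pi.pow_apply]
    rw [hsq, hmean]
  -- grouping lemma
  have hgroup : (∑ k : C, ∑ i ∈ Finset.univ.filter (fun i => c i = k),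
        ∑ j ∈ Finset.univ.filter (fun j => c j = k), g i * g j)
      = ∑ i, ∑ j, (if c j = c i then g i * g j else 0) := by
    simp_rw [Finset.sum_filter]
    rw [Finset.sum_comm]
    refine Finset.sum_congr rfl fun i _ => ?_
    rw [Finset.sum_ite_eq]
    simp
  -- pointwise identity
  have hpoint : ∀ i j, g i / A * (g j / A) * q i j - g i * g j
      = (B / A ^ 2 - 1) * (if c j = c i then g i * g j else 0)
        + (if i = j then (A - B) / A ^ 2 * (g i * g j) else 0) := by
    intro i j
    by_cases hij : i = j
    · subst hij
      rw [hq_diag, if_pos rfl, if_pos rfl]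
      field_simp
      ring
    · by_cases hc : c i = c j
      · rw [hq_same i j hij hc, if_pos hc.symm, if_neg hij]
        field_simp
        ring
      · rw [hq_diff i j hc, if_neg (fun h => hc h.symm), if_neg hij]
        field_simp
        ring
  rw [hvar, hgroup]
  have hexp : ((1 / (N : ℝ)) * ∑ i, g i) ^ 2
      = (1 / (N : ℝ)) ^ 2 * ∑ i, ∑ j, g i * g j := by
    rw [mul_pow]
    congr 1
    rw [sq, Finset.sum_mul_sum]
  rw [hexp, ← mul_sub, ← Finset.sum_sub_distrib]
  simp_rw [← Finset.sum_sub_distrib, hpoint]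
  have hdiag : ∀ i : Fin N, (∑ j, if i = j then (A - B) / A ^ 2 * (g i * g j) else 0)
      = (A - B) / A ^ 2 * (g i * g i) := by
    intro i
    rw [Finset.sum_ite_eq]
    simp
  have hsplit : (∑ i, ∑ j, (((B / A ^ 2 - 1) * if c j = c i then g i * g j else 0) +
        if i = j then (A - B) / A ^ 2 * (g i * g j) else 0))
      = (B / A ^ 2 - 1) * (∑ i, ∑ j, if c j = c i then g i * g j else 0)
        + (A - B) / A ^ 2 * ∑ i, g i * g i := by
    rw [Finset.mul_sum, Finset.mul_sum, ← Finset.sum_add_distrib]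
    refine Finset.sum_congr rfl fun i _ => ?_
    rw [Finset.sum_add_distrib, ← Finset.mul_sum, hdiag i]
  rw [hsplit]
  simp only [hg]
  ring
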